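/- Let M ∈ ℝ^{3N×3N} be symmetric with 3×3 blocks M_{ij}, let Θ* = [R₁*, …, R_N*] ∈ ℝ^{3×3N} with each R_i* ∈ O(3), and define Λ* as the block-diagonal matrix with blocks Λ_i* = ∑_{j=1}^N M_{ij} (R_j*)ᵀ R_i*. If each Λ_i* is symmetric and M − Λ* ⪰ 0, then for every Θ = [R₁, …, R_N] with all R_i ∈ O(3) (or SO(3)), Tr(Θ M Θᵀ) ≥ Tr(Θ* M (Θ*)ᵀ); i.e., Θ* is a global minimizer of Tr(Θ M Θᵀ) over products of orthogonal matrices. -/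

import Mathlib

open Matrix

/-- Horizontal concatenation `[R₁ … R_N] ∈ ℝ^{3×3N}` of `N` matrices `3×3`. -/
noncomputable def hcat {N : ℕ} (R : Fin N → Matrix (Fin 3) (Fin 3) ℝ) :
    Matrix (Fin 3) (Fin N × Fin 3) ℝ :=
  Matrix.of fun a p => R p.1 a p.2

lemma trace_conj_blockdiag {N : ℕ} (R : Fin N → Matrix (Fin 3) (Fin 3) ℝ)
    (hR : ∀ i, (R i)ᵀ * R i = 1)
    (Λ : Fin N → Matrix (Fin 3) (Fin 3) ℝ)
    (A : Matrix (Fin N × Fin 3) (Fin N × Fin 3) ℝ)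
    (hA : ∀ i j a b, A (i, a) (j, b) = if i = j then Λ i a b else 0) :
    (hcat R * A * (hcat R)ᵀ).trace = ∑ i, (Λ i).trace := by
  have hRe : ∀ i b c, (∑ a, R i a b * R i a c) = (1 : Matrix (Fin 3) (Fin 3) ℝ) b c := by
    intro i b c
    have := congrArg (fun M => M b c) (hR i)
    simpa [Matrix.mul_apply] using this
  simp only [Matrix.trace, Matrix.diag, Matrix.mul_apply, Matrix.transpose_apply,
    Fintype.sum_prod_type, hcat, Matrix.of_apply, hA, mul_ite, mul_zero, ite_mul, zero_mul,
    Finset.sum_ite_eq, Finset.sum_ite_eq', Finset.mem_univ, if_true, Finset.sum_mul]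
  rw [Finset.sum_comm]
  refine Finset.sum_congr rfl fun i _ => ?_
  calc ∑ a, ∑ c, ∑ j, ∑ b, (if j = i then R j a b * Λ j b c * R i a c else 0)
      = ∑ a, ∑ c, ∑ b, R i a b * Λ i b c * R i a c := by
        refine Finset.sum_congr rfl fun a _ => Finset.sum_congr rfl fun c _ => ?_
        rw [Finset.sum_comm]
        simp [Finset.sum_ite_eq']
    _
      = ∑ c, ∑ b, Λ i b c * ∑ a, R i a b * R i a c := by
        conv_lhs => rw [Finset.sum_comm]
        refine Finset.sum_congr rfl fun c _ => ?_
        conv_lhs => rw [Finset.sum_comm]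
        refine Finset.sum_congr rfl fun b _ => ?_
        rw [Finset.mul_sum]
        exact Finset.sum_congr rfl fun a _ => by ring
    _ = (Λ i).trace := by
        simp [hRe, Matrix.one_apply, Matrix.trace, Matrix.diag]

lemma psd_trace_nonneg {n : Type*} [Fintype n] [DecidableEq n] {A : Matrix n n ℝ}
    (h : A.PosSemidef) : 0 ≤ A.trace := by
  apply Finset.sum_nonneg
  intro a _
  exact h.diag_nonneg

theorem global_optimality_certificate (N : ℕ)
    (Mb : Fin N → Fin N → Matrix (Fin 3) (Fin 3) ℝ)
    (M : Matrix (Fin N × Fin 3) (Fin N × Fin 3) ℝ)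
    (hMb : ∀ i j a b, M (i, a) (j, b) = Mb i j a b)
    (hM : M.IsHermitian)
    (Rstar : Fin N → Matrix (Fin 3) (Fin 3) ℝ)
    (hRstar : ∀ i, (Rstar i)ᵀ * Rstar i = 1)
    (Λ : Fin N → Matrix (Fin 3) (Fin 3) ℝ)
    (hΛ : ∀ i, Λ i = ∑ j, Mb i j * (Rstar j)ᵀ * Rstar i)
    (hΛsym : ∀ i, (Λ i).IsSymm)
    (Λmat : Matrix (Fin N × Fin 3) (Fin N × Fin 3) ℝ)
    (hΛmat : ∀ i j a b, Λmat (i, a) (j, b) = if i = j then Λ i a b else 0)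
    (hPSD : (M - Λmat).PosSemidef) :
    ∀ R : Fin N → Matrix (Fin 3) (Fin 3) ℝ, (∀ i, (R i)ᵀ * R i = 1) →
      (hcat Rstar * M * (hcat Rstar)ᵀ).trace ≤ (hcat R * M * (hcat R)ᵀ).trace := by
  intro R hR
  -- key: Λ i * (Rstar i)ᵀ = ∑ j, Mb i j * (Rstar j)ᵀ
  have hkey : ∀ i, Λ i * (Rstar i)ᵀ = ∑ j, Mb i j * (Rstar j)ᵀ := by
    intro i
    rw [hΛ i, Finset.sum_mul]
    refine Finset.sum_congr rfl fun j _ => ?_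
    have h1 : Rstar i * (Rstar i)ᵀ = 1 := mul_eq_one_comm.mp (hRstar i)
    rw [mul_assoc (Mb i j * (Rstar j)ᵀ), h1, mul_one]
  -- (M - Λmat) * (hcat Rstar)ᵀ = 0
  have h0 : (M - Λmat) * (hcat Rstar)ᵀ = 0 := by
    ext ⟨i, b⟩ a
    have hk := congrArg (fun X => X b a) (hkey i)
    simp only [Matrix.sum_apply, Matrix.mul_apply, Matrix.transpose_apply] at hk
    simp only [Matrix.mul_apply, Matrix.sub_apply, Fintype.sum_prod_type, hMb, hΛmat,
      hcat, Matrix.transpose_apply, Matrix.of_apply, sub_mul, Finset.sum_sub_distrib,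
      ite_mul, zero_mul, Matrix.zero_apply]
    rw [sub_eq_zero]
    conv_rhs => rw [Finset.sum_comm]
    simp only [Finset.sum_ite_eq, Finset.mem_univ, if_true]
    exact hk.symm
  -- Θ* M Θ*ᵀ = Θ* Λ Θ*ᵀ
  have hstar : hcat Rstar * M * (hcat Rstar)ᵀ = hcat Rstar * Λmat * (hcat Rstar)ᵀ := by
    have expand : hcat Rstar * (M - Λmat) * (hcat Rstar)ᵀ
        = hcat Rstar * M * (hcat Rstar)ᵀ - hcat Rstar * Λmat * (hcat Rstar)ᵀ := by
      rw [Matrix.mul_sub, Matrix.sub_mul]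
    have hz : hcat Rstar * M * (hcat Rstar)ᵀ - hcat Rstar * Λmat * (hcat Rstar)ᵀ = 0 := by
      rw [← expand, Matrix.mul_assoc, h0, Matrix.mul_zero]
    exact sub_eq_zero.mp hz
  have tΘ : (hcat R * Λmat * (hcat R)ᵀ).trace = ∑ i, (Λ i).trace :=
    trace_conj_blockdiag R hR Λ Λmat hΛmat
  have tΘs : (hcat Rstar * Λmat * (hcat Rstar)ᵀ).trace = ∑ i, (Λ i).trace :=
    trace_conj_blockdiag Rstar hRstar Λ Λmat hΛmat
  have psd2 : (hcat R * (M - Λmat) * (hcat R)ᵀ).PosSemidef := by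
    have := hPSD.mul_mul_conjTranspose_same (hcat R)
    simpa using this
  have htr : 0 ≤ (hcat R * (M - Λmat) * (hcat R)ᵀ).trace := psd_trace_nonneg psd2
  have hsplit : (hcat R * M * (hcat R)ᵀ).trace
      = (hcat R * (M - Λmat) * (hcat R)ᵀ).trace + (hcat R * Λmat * (hcat R)ᵀ).trace := by
    have : hcat R * M * (hcat R)ᵀ
        = hcat R * (M - Λmat) * (hcat R)ᵀ + hcat R * Λmat * (hcat R)ᵀ := by
      rw [Matrix.mul_sub, Matrix.sub_mul, sub_add_cancel]
    rw [this, Matrix.trace_add]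
  rw [hstar, tΘs, hsplit, tΘ]
  linarith
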